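/- Modulo the Gröbner basis 𝒢₀ of rank-1 binomials, the monomial x_{a^1} ⋯ x_{a^k} reduces to x_{b^1} ⋯ x_{b^k}, where for each coordinate i the tuple (b^1_i, ..., b^k_i) is the ascending sort of (a^1_i, ..., a^k_i). -/

import Mathlib

open MvPolynomial

/-- Multi-index set `[n₁] × ⋯ × [n_d]`. -/
abbrev Idx {d : ℕ} (n : Fin d → ℕ) : Type := ∀ i, Fin (n i)

/-- Componentwise minimum of multi-indices. -/
def amin {d : ℕ} {n : Fin d → ℕ} (a b : Idx n) : Idx n := fun i => min (a i) (b i)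

/-- Componentwise maximum of multi-indices. -/
def amax {d : ℕ} {n : Fin d → ℕ} (a b : Idx n) : Idx n := fun i => max (a i) (b i)

/-- Lexicographic order on multi-indices: `a < b` iff at the first position where they
differ, `a` is smaller.  (With this convention the variable `x_a` is *larger* in the
variable order `x_{1⋯1} > x_{1⋯2} > ⋯ > x_{n₁⋯n_d}` exactly when `a` is lexicographically
smaller.) -/
def idxLt {d : ℕ} {n : Fin d → ℕ} (a b : Idx n) : Prop :=
  ∃ i, a i < b i ∧ ∀ j, j < i → a j = b j

/-- Total degree of an exponent vector. -/
def expDeg {σ : Type*} (α : σ →₀ ℕ) : ℕ := α.sum fun _ k => k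

/-- The graded reverse lexicographic order on exponent vectors (viewing the variable
`x_a` with lexicographically smaller index `a` as the larger variable): `α < β` iff
`deg α < deg β`, or the degrees agree and at the largest (in the variable order, i.e.
lexicographically largest) index where they differ, `α` has the *larger* exponent. -/
def grevlexLt {d : ℕ} {n : Fin d → ℕ} (α β : Idx n →₀ ℕ) : Prop :=
  expDeg α < expDeg β ∨
    (expDeg α = expDeg β ∧ ∃ j, β j < α j ∧ ∀ k, idxLt j k → α k = β k)

/-- `m` is the leading monomial (w.r.t. grevlex) of the polynomial `f`. -/
def IsLeadMon {d : ℕ} {n : Fin d → ℕ} (f : MvPolynomial (Idx n) ℝ)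
    (m : Idx n →₀ ℕ) : Prop :=
  m ∈ f.support ∧ ∀ m' ∈ f.support, m' ≠ m → grevlexLt m' m

/-- `G` is a Gröbner basis of the ideal `I` w.r.t. grevlex: `G` generates `I` and the
leading monomial of every nonzero element of `I` is divisible by the leading monomial of
some element of `G`. -/
def IsGroebnerBasis {d : ℕ} {n : Fin d → ℕ} (G : Set (MvPolynomial (Idx n) ℝ))
    (I : Ideal (MvPolynomial (Idx n) ℝ)) : Prop :=
  Ideal.span G = I ∧
    ∀ f ∈ I, f ≠ 0 → ∀ m, IsLeadMon f m →
      ∃ g ∈ G, ∃ mg, IsLeadMon g mg ∧ mg ≤ m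

/-- `G` is a *reduced* Gröbner basis of `I`: it is a Gröbner basis, every element is monic,
and no monomial of an element of `G` is divisible by the leading monomial of another
element of `G`. -/
def IsReducedGroebnerBasis {d : ℕ} {n : Fin d → ℕ} (G : Set (MvPolynomial (Idx n) ℝ))
    (I : Ideal (MvPolynomial (Idx n) ℝ)) : Prop :=
  IsGroebnerBasis G I ∧
    ∀ g ∈ G, (∀ m, IsLeadMon g m → coeff m g = 1) ∧
      ∀ m ∈ g.support, ∀ g' ∈ G, g' ≠ g → ∀ m', IsLeadMon g' m' → ¬ m' ≤ m

/-- The set of rank-1 binomials `x_a x_b − x_{a∧b} x_{a∨b}`. -/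
noncomputable def rk1Binomials {d : ℕ} (n : Fin d → ℕ) : Set (MvPolynomial (Idx n) ℝ) :=
  {f | ∃ a b : Idx n, f = X a * X b - X (amin a b) * X (amax a b)}

/-- The ideal `I₀` generated by all rank-1 binomials. -/
noncomputable def I0 {d : ℕ} (n : Fin d → ℕ) : Ideal (MvPolynomial (Idx n) ℝ) :=
  Ideal.span (rk1Binomials n)

/-- The reduced Gröbner basis `𝒢₀` of `I₀`. -/
noncomputable def G0 {d : ℕ} (n : Fin d → ℕ) : Set (MvPolynomial (Idx n) ℝ) :=
  {f | ∃ a b : Idx n, idxLt a b ∧ (∃ i, b i < a i) ∧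
    f = X a * X b - X (amin a b) * X (amax a b)}

/-- `r` is a normal form of `f` modulo `G`: the difference lies in the ideal generated by
`G`, and no monomial of `r` is divisible by a leading monomial of an element of `G`. -/
def ReducesTo {d : ℕ} {n : Fin d → ℕ} (G : Set (MvPolynomial (Idx n) ℝ))
    (f r : MvPolynomial (Idx n) ℝ) : Prop :=
  f - r ∈ Ideal.span G ∧
    ∀ m ∈ r.support, ∀ g ∈ G, ∀ mg, IsLeadMon g mg → ¬ mg ≤ m

section Helpers

variable {d : ℕ} {n : Fin d → ℕ}

lemma idxLt_irrefl (a : Idx n) : ¬ idxLt a a := by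
  rintro ⟨i, hi, -⟩; exact lt_irrefl _ hi

lemma idxLt_asymm {a b : Idx n} (h : idxLt a b) : ¬ idxLt b a := by
  rintro ⟨i₂, hi₂, hj₂⟩
  obtain ⟨i₁, hi₁, hj₁⟩ := h
  rcases lt_trichotomy i₁ i₂ with h' | h' | h'
  · exact absurd (hj₂ i₁ h') (fun he => absurd (he ▸ hi₁) (lt_irrefl _))
  · subst h'; exact absurd (hi₁.trans hi₂) (lt_irrefl _)
  · exact absurd (hj₁ i₂ h') (fun he => absurd (he ▸ hi₂) (lt_irrefl _))

lemma idxLt_of_ne {a b : Idx n} (h : a ≠ b) : idxLt a b ∨ idxLt b a := by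
  classical
  set s := Finset.univ.filter fun i => a i ≠ b i with hs
  have hne : s.Nonempty := by
    by_contra hc
    rw [Finset.not_nonempty_iff_eq_empty, hs, Finset.filter_eq_empty_iff] at hc
    exact h (funext fun i => not_not.1 (hc (Finset.mem_univ i)))
  set i := s.min' hne with hi
  have hmem : i ∈ s := s.min'_mem hne
  have hiab : a i ≠ b i := by simpa [hs] using hmem
  have hjeq : ∀ j, j < i → a j = b j := by
    intro j hj
    by_contra hc
    have : i ≤ j := s.min'_le j (by simp [hs, hc])
    exact absurd (lt_of_lt_of_le hj this) (lt_irrefl _)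
  rcases lt_or_gt_of_ne hiab with h' | h'
  · exact Or.inl ⟨i, h', hjeq⟩
  · exact Or.inr ⟨i, h', fun j hj => (hjeq j hj).symm⟩

lemma idxLt_of_le_of_ne {a b : Idx n} (hle : ∀ i, a i ≤ b i) (h : a ≠ b) : idxLt a b := by
  rcases idxLt_of_ne h with h' | h'
  · exact h'
  · obtain ⟨i, hi, -⟩ := h'
    exact absurd (lt_of_le_of_lt (hle i) hi) (lt_irrefl _)

end Helpers
section Mono

variable {d : ℕ} {n : Fin d → ℕ}
open Finsupp

lemma prod_X_eq_monomial {k : ℕ} (a : Fin k → Idx n) (s : Finset (Fin k)) :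
    (∏ l ∈ s, (X (a l) : MvPolynomial (Idx n) ℝ)) =
      monomial (∑ l ∈ s, Finsupp.single (a l) 1) 1 := by
  classical
  induction s using Finset.induction_on with
  | empty => simp [MvPolynomial.monomial_zero']
  | insert _ _ hns ih =>
      rw [Finset.prod_insert hns, Finset.sum_insert hns, ih]
      rw [show (X (a _) : MvPolynomial (Idx n) ℝ) = monomial (Finsupp.single (a _) 1) 1 from rfl,
        monomial_mul, one_mul]

lemma XX_eq_monomial (u v : Idx n) :
    (X u * X v : MvPolynomial (Idx n) ℝ) =
      monomial (Finsupp.single u 1 + Finsupp.single v 1) 1 := by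
  rw [show (X u : MvPolynomial (Idx n) ℝ) = monomial (Finsupp.single u 1) 1 from rfl,
    show (X v : MvPolynomial (Idx n) ℝ) = monomial (Finsupp.single v 1) 1 from rfl,
    monomial_mul, one_mul]

lemma pair_apply (u v w : Idx n) :
    (Finsupp.single u 1 + Finsupp.single v 1 : Idx n →₀ ℕ) w
      = (if u = w then 1 else 0) + (if v = w then 1 else 0) := by
  simp [Finsupp.single_apply]

lemma expDeg_pair (u v : Idx n) :
    expDeg (Finsupp.single u 1 + Finsupp.single v 1 : Idx n →₀ ℕ) = 2 := by
  classical
  rw [expDeg, Finsupp.sum_add_index' (fun _ => rfl) (fun _ _ _ => rfl),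
    Finsupp.sum_single_index rfl, Finsupp.sum_single_index rfl]

end Mono
section Lead

variable {d : ℕ} {n : Fin d → ℕ}
open Finsupp

variable {u v : Idx n}

lemma incomp_facts (h1 : ∃ i, u i < v i) (h2 : ∃ i, v i < u i) :
    u ≠ amax u v ∧ v ≠ amax u v ∧ u ≠ v := by
  obtain ⟨i1, hi1⟩ := h1
  obtain ⟨i2, hi2⟩ := h2
  refine ⟨?_, ?_, ?_⟩
  · intro h
    have := congrFun h i1
    simp only [amax] at this
    rw [max_eq_right hi1.le] at this
    exact absurd (this ▸ hi1) (lt_irrefl _)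
  · intro h
    have := congrFun h i2
    simp only [amax] at this
    rw [max_eq_left hi2.le] at this
    exact absurd (this ▸ hi2) (lt_irrefl _)
  · intro h
    exact absurd (h ▸ hi1) (lt_irrefl _)

lemma idxLt_amax_left (h2 : ∃ i, v i < u i) (h1 : ∃ i, u i < v i) : idxLt u (amax u v) :=
  idxLt_of_le_of_ne (fun i => le_max_left _ _) (incomp_facts h1 h2).1

lemma idxLt_amax_right (h2 : ∃ i, v i < u i) (h1 : ∃ i, u i < v i) : idxLt v (amax u v) :=
  idxLt_of_le_of_ne (fun i => le_max_right _ _) (incomp_facts h1 h2).2.1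

/-- For an incomparable pair, the leading monomial of the binomial is `e_u + e_v`. -/
lemma leadMon_binomial (h1 : ∃ i, u i < v i) (h2 : ∃ i, v i < u i)
    {mg : Idx n →₀ ℕ}
    (h : IsLeadMon (X u * X v - X (amin u v) * X (amax u v)) mg) :
    mg = Finsupp.single u 1 + Finsupp.single v 1 := by
  classical
  set m := amin u v
  set M := amax u v
  obtain ⟨huM, hvM, huv⟩ := incomp_facts h1 h2
  have hmM : m ≠ M := by
    intro h'
    obtain ⟨i1, hi1⟩ := h1
    have := congrFun h' i1
    simp only [m, M, amin, amax] at this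
    rw [min_eq_left hi1.le, max_eq_right hi1.le] at this
    exact absurd (this ▸ hi1) (lt_irrefl _)
  set α1 : Idx n →₀ ℕ := Finsupp.single u 1 + Finsupp.single v 1 with hα1
  set α2 : Idx n →₀ ℕ := Finsupp.single m 1 + Finsupp.single M 1 with hα2
  -- values of α1, α2 at M
  have hα1M : α1 M = 0 := by
    rw [hα1, pair_apply, if_neg huM, if_neg hvM]
  have hα2M : α2 M = 1 := by
    rw [hα2, pair_apply, if_neg hmM, if_pos rfl]
  have hα12 : α1 ≠ α2 := fun h' => by
    rw [h', hα2M] at hα1M; exact one_ne_zero hα1M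
  -- the polynomial as difference of monomials
  have hg : (X u * X v - X m * X M : MvPolynomial (Idx n) ℝ)
      = monomial α1 1 - monomial α2 1 := by
    rw [XX_eq_monomial, XX_eq_monomial]
  -- coefficients
  have hcoeff : ∀ β, coeff β (X u * X v - X m * X M : MvPolynomial (Idx n) ℝ)
      = (if α1 = β then (1:ℝ) else 0) - (if α2 = β then 1 else 0) := by
    intro β
    rw [hg, MvPolynomial.coeff_sub, MvPolynomial.coeff_monomial, MvPolynomial.coeff_monomial]
  have hsupp : ∀ β, β ∈ (X u * X v - X m * X M : MvPolynomial (Idx n) ℝ).support →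
      β = α1 ∨ β = α2 := by
    intro β hβ
    rw [MvPolynomial.mem_support_iff, hcoeff] at hβ
    by_contra hc
    push_neg at hc
    rw [if_neg (fun h => hc.1 h.symm), if_neg (fun h => hc.2 h.symm), sub_zero] at hβ
    exact hβ rfl
  have hα1mem : α1 ∈ (X u * X v - X m * X M : MvPolynomial (Idx n) ℝ).support := by
    rw [MvPolynomial.mem_support_iff, hcoeff, if_pos rfl, if_neg (fun h => hα12 h.symm),
      sub_zero]
    exact one_ne_zero
  -- not grevlexLt α1 α2
  have hnot : ¬ grevlexLt α1 α2 := by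
    rintro (hlt | ⟨-, j, hj, hall⟩)
    · rw [hα1, hα2, expDeg_pair, expDeg_pair] at hlt
      exact absurd hlt (lt_irrefl _)
    · have hj1 : 0 < α1 j := lt_of_le_of_lt (Nat.zero_le _) hj
      have hju : u = j ∨ v = j := by
        by_contra hc
        push_neg at hc
        rw [hα1, pair_apply, if_neg hc.1, if_neg hc.2] at hj1
        exact absurd hj1 (lt_irrefl _)
      have hMeq : α1 M = α2 M := by
        rcases hju with h' | h'
        · exact hall M (h' ▸ idxLt_amax_left h2 h1)
        · exact hall M (h' ▸ idxLt_amax_right h2 h1)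
      rw [hα1M, hα2M] at hMeq
      exact zero_ne_one hMeq
  obtain ⟨hmem, hdom⟩ := h
  rcases hsupp mg hmem with h' | h'
  · exact h'
  · exact absurd (hdom α1 hα1mem (fun he => hα12 (he.trans h'))) (h' ▸ hnot)

end Lead
section Part2

variable {d : ℕ} {n : Fin d → ℕ}

lemma sorted_not_divisible {k : ℕ} (b : Fin k → Idx n)
    (hmono : ∀ i : Fin d, Monotone fun l : Fin k => b l i) :
    ∀ m ∈ (∏ l, (X (b l) : MvPolynomial (Idx n) ℝ)).support,
      ∀ g ∈ G0 n, ∀ mg, IsLeadMon g mg → ¬ mg ≤ m := by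
  classical
  intro m hm g hg mg hlead hle
  obtain ⟨u, v, huv, h2, rfl⟩ := hg
  obtain ⟨i1, hi1, -⟩ := huv
  have h1 : ∃ i, u i < v i := ⟨i1, hi1⟩
  have hmg := leadMon_binomial h1 h2 hlead
  -- m is the exponent of the product monomial
  rw [prod_X_eq_monomial, MvPolynomial.support_monomial, if_neg (one_ne_zero)] at hm
  rw [Finset.mem_singleton] at hm
  subst hm hmg
  -- the exponent vector of the product, evaluated
  have happly : ∀ w : Idx n, (∑ l, Finsupp.single (b l) 1 : Idx n →₀ ℕ) w
      = ∑ l, (if b l = w then 1 else 0) := by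
    intro w
    rw [Finsupp.finset_sum_apply]
    exact Finset.sum_congr rfl fun l _ => Finsupp.single_apply
  have hexists : ∀ w : Idx n,
      (Finsupp.single u 1 + Finsupp.single v 1 : Idx n →₀ ℕ) w ≠ 0 →
      ∃ l, b l = w := by
    intro w hw
    have := hle w
    by_contra hc
    push_neg at hc
    rw [happly] at this
    rw [Finset.sum_eq_zero (fun l _ => if_neg (hc l))] at this
    exact hw (Nat.le_zero.1 this)
  have huv' : u ≠ v := (incomp_facts h1 h2).2.2
  obtain ⟨l₁, hl₁⟩ := hexists u (by rw [pair_apply, if_pos rfl, if_neg (fun h => huv' h.symm)]; simp)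
  obtain ⟨l₂, hl₂⟩ := hexists v (by rw [pair_apply, if_neg huv', if_pos rfl]; simp)
  obtain ⟨i2, hi2⟩ := h2
  rcases le_total l₁ l₂ with h' | h'
  · have := hmono i2 h'
    simp only [hl₁, hl₂] at this
    exact absurd (lt_of_le_of_lt this hi2) (lt_irrefl _)
  · have := hmono i1 h'
    simp only [hl₁, hl₂] at this
    exact absurd (lt_of_le_of_lt this hi1) (lt_irrefl _)

end Part2
section Sorting

variable {d : ℕ} {n : Fin d → ℕ}

lemma fin_val_min {m : ℕ} (x y : Fin m) : ((min x y : Fin m) : ℕ) = min (x : ℕ) (y : ℕ) := by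
  rcases le_total x y with h | h
  · rw [min_eq_left h, min_eq_left (by exact_mod_cast h)]
  · rw [min_eq_right h, min_eq_right (by exact_mod_cast h)]

lemma fin_val_max {m : ℕ} (x y : Fin m) : ((max x y : Fin m) : ℕ) = max (x : ℕ) (y : ℕ) := by
  rcases le_total x y with h | h
  · rw [max_eq_right h, max_eq_right (by exact_mod_cast h)]
  · rw [max_eq_left h, max_eq_left (by exact_mod_cast h)]

lemma weight_le {w1 w2 x y : ℕ} (hw : w2 ≤ w1) :
    w1 * min x y + w2 * max x y ≤ w1 * x + w2 * y := by
  rcases le_total x y with h | h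
  · rw [min_eq_left h, max_eq_right h]
  · rw [min_eq_right h, max_eq_left h]
    nlinarith

lemma weight_lt {w1 w2 x y : ℕ} (hw : w2 < w1) (hxy : y < x) :
    w1 * min x y + w2 * max x y < w1 * x + w2 * y := by
  rw [min_eq_right hxy.le, max_eq_left hxy.le]
  nlinarith

/-- Weighted-degree potential used to show the sorting process terminates. -/
def phi {d : ℕ} {n : Fin d → ℕ} {k : ℕ} (a : Fin k → Idx n) : ℕ :=
  ∑ l : Fin k, ∑ i : Fin d, (k - (l : ℕ)) * ((a l i : ℕ))

lemma sort_mem {k : ℕ} (b : Fin k → Idx n)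
    (hmono : ∀ i : Fin d, Monotone fun l : Fin k => b l i) :
    ∀ (N : ℕ) (a : Fin k → Idx n), phi a ≤ N →
      (∀ i : Fin d, ∃ π : Equiv.Perm (Fin k), ∀ l, b l i = a (π l) i) →
      (∏ l, (X (a l) : MvPolynomial (Idx n) ℝ)) - (∏ l, X (b l)) ∈ Ideal.span (G0 n) := by
  classical
  intro N
  induction N using Nat.strong_induction_on with
  | _ N ih =>
  intro a hphi hperm
  by_cases hs : ∀ l l' : Fin k, l < l' → ∀ i, a l i ≤ a l' i
  · -- a is already sorted, hence a = b
    have hab : a = b := by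
      funext l i
      have hmon : Monotone fun l => a l i := by
        intro p q hpq
        rcases lt_or_eq_of_le hpq with h' | h'
        · exact hs p q h' i
        · rw [h']
      obtain ⟨π, hπ⟩ := hperm i
      have hbi : (fun l => b l i) = (fun l => a l i) ∘ π := funext fun l => hπ l
      have h2 : Monotone ((fun l => a l i) ∘ π) := hbi ▸ hmono i
      have h3 : Monotone ((fun l => a l i) ∘ (1 : Equiv.Perm (Fin k))) := by
        simpa using hmon
      have h4 := congrFun (Tuple.unique_monotone h2 h3) l
      simp only [Function.comp_apply, Equiv.Perm.coe_one, id_eq] at h4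
      rw [hπ l, h4]
    rw [hab, sub_self]
    exact Ideal.zero_mem _
  · push_neg at hs
    obtain ⟨l₀, l₀', hlt, i₀, hi₀⟩ := hs
    have hne : l₀ ≠ l₀' := ne_of_lt hlt
    set a' : Fin k → Idx n :=
      fun l => if l = l₀ then amin (a l₀) (a l₀')
        else if l = l₀' then amax (a l₀) (a l₀') else a l with ha'
    have ha'l₀ : a' l₀ = amin (a l₀) (a l₀') := by simp [ha']
    have ha'l₀' : a' l₀' = amax (a l₀) (a l₀') := by simp [ha', hne.symm]
    have ha'other : ∀ l, l ≠ l₀ → l ≠ l₀' → a' l = a l := by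
      intro l h1 h2; simp [ha', h1, h2]
    have hmem' : l₀' ∈ Finset.univ.erase l₀ :=
      Finset.mem_erase.mpr ⟨hne.symm, Finset.mem_univ l₀'⟩
    -- the potential strictly decreases
    have hw : (k - (l₀' : ℕ)) < k - (l₀ : ℕ) := by
      have h1 := l₀'.isLt
      have h2 : (l₀ : ℕ) < (l₀' : ℕ) := hlt
      omega
    have hphidec : phi a' < phi a := by
      have hsplit : ∀ c : Fin k → Idx n, phi c
          = (∑ i, (k - (l₀ : ℕ)) * ((c l₀ i : ℕ)))
          + ((∑ i, (k - (l₀' : ℕ)) * ((c l₀' i : ℕ)))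
          + ∑ l ∈ (Finset.univ.erase l₀).erase l₀', ∑ i, (k - (l : ℕ)) * ((c l i : ℕ))) := by
        intro c
        rw [phi, ← Finset.add_sum_erase _ _ (Finset.mem_univ l₀),
          ← Finset.add_sum_erase _ _ hmem']
      rw [hsplit a, hsplit a']
      have hrest : ∑ l ∈ (Finset.univ.erase l₀).erase l₀', ∑ i, (k - (l : ℕ)) * ((a' l i : ℕ))
          = ∑ l ∈ (Finset.univ.erase l₀).erase l₀', ∑ i, (k - (l : ℕ)) * ((a l i : ℕ)) := by
        refine Finset.sum_congr rfl fun l hl => ?_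
        rw [Finset.mem_erase, Finset.mem_erase] at hl
        rw [ha'other l hl.2.1 hl.1]
      rw [hrest, ha'l₀, ha'l₀']
      have hkey : (∑ i, (k - (l₀ : ℕ)) * ((amin (a l₀) (a l₀') i : ℕ)))
          + (∑ i, (k - (l₀' : ℕ)) * ((amax (a l₀) (a l₀') i : ℕ)))
          < (∑ i, (k - (l₀ : ℕ)) * ((a l₀ i : ℕ)))
          + (∑ i, (k - (l₀' : ℕ)) * ((a l₀' i : ℕ))) := by
        rw [← Finset.sum_add_distrib, ← Finset.sum_add_distrib]
        apply Finset.sum_lt_sum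
        · intro i _
          simp only [amin, amax, fin_val_min, fin_val_max]
          exact weight_le hw.le
        · refine ⟨i₀, Finset.mem_univ i₀, ?_⟩
          simp only [amin, amax, fin_val_min, fin_val_max]
          exact weight_lt hw (by exact_mod_cast hi₀)
      omega
    -- the permutation hypothesis is preserved
    have hperm' : ∀ i : Fin d, ∃ π : Equiv.Perm (Fin k), ∀ l, b l i = a' (π l) i := by
      intro i
      obtain ⟨π, hπ⟩ := hperm i
      by_cases h : a l₀ i ≤ a l₀' i
      · refine ⟨π, fun l => ?_⟩
        rw [hπ l]
        by_cases h1 : π l = l₀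
        · rw [h1, ha'l₀]; simp only [amin]; rw [min_eq_left h]
        · by_cases h2 : π l = l₀'
          · rw [h2, ha'l₀']; simp only [amax]; rw [max_eq_right h]
          · rw [ha'other _ h1 h2]
      · have h' : a l₀' i ≤ a l₀ i := le_of_not_ge h
        refine ⟨π.trans (Equiv.swap l₀ l₀'), fun l => ?_⟩
        rw [hπ l]
        simp only [Equiv.trans_apply]
        by_cases h1 : π l = l₀
        · rw [h1, Equiv.swap_apply_left, ha'l₀']
          simp only [amax]; rw [max_eq_left h']
        · by_cases h2 : π l = l₀'
          · rw [h2, Equiv.swap_apply_right, ha'l₀]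
            simp only [amin]; rw [min_eq_right h']
          · rw [Equiv.swap_apply_of_ne_of_ne h1 h2, ha'other _ h1 h2]
    -- the basic binomial lies in the span
    have hbin : (X (a l₀) * X (a l₀') - X (amin (a l₀) (a l₀')) * X (amax (a l₀) (a l₀'))
        : MvPolynomial (Idx n) ℝ) ∈ Ideal.span (G0 n) := by
      by_cases hcomp : ∀ i, a l₀' i ≤ a l₀ i
      · have hm : amin (a l₀) (a l₀') = a l₀' := funext fun i => min_eq_right (hcomp i)
        have hM : amax (a l₀) (a l₀') = a l₀ := funext fun i => max_eq_left (hcomp i)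
        rw [hm, hM]
        have h0 : (X (a l₀) * X (a l₀') - X (a l₀') * X (a l₀) : MvPolynomial (Idx n) ℝ)
            = 0 := by ring
        rw [h0]; exact Ideal.zero_mem _
      · push_neg at hcomp
        obtain ⟨i1, hxy1⟩ := hcomp
        have hxyne : a l₀ ≠ a l₀' := by
          intro h
          rw [h] at hi₀
          exact lt_irrefl _ hi₀
        rcases idxLt_of_ne hxyne with hl | hl
        · exact Ideal.subset_span ⟨a l₀, a l₀', hl, ⟨i₀, hi₀⟩, rfl⟩
        · have h1 : amin (a l₀') (a l₀) = amin (a l₀) (a l₀') := funext fun i => min_comm _ _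
          have h2 : amax (a l₀') (a l₀) = amax (a l₀) (a l₀') := funext fun i => max_comm _ _
          have heq : (X (a l₀) * X (a l₀')
                - X (amin (a l₀) (a l₀')) * X (amax (a l₀) (a l₀')) : MvPolynomial (Idx n) ℝ)
              = X (a l₀') * X (a l₀)
                - X (amin (a l₀') (a l₀)) * X (amax (a l₀') (a l₀)) := by
            rw [h1, h2]; ring
          rw [heq]
          exact Ideal.subset_span ⟨a l₀', a l₀, hl, ⟨i1, hxy1⟩, rfl⟩
    -- factorisation of the difference of products
    have hprod : ∀ c : Fin k → Idx n, (∀ l, l ≠ l₀ → l ≠ l₀' → c l = a l) →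
        (∏ l, (X (c l) : MvPolynomial (Idx n) ℝ)) = X (c l₀) * (X (c l₀')
          * ∏ l ∈ (Finset.univ.erase l₀).erase l₀', X (a l)) := by
      intro c hc
      rw [← Finset.mul_prod_erase _ _ (Finset.mem_univ l₀),
        ← Finset.mul_prod_erase _ _ hmem']
      congr 2
      refine Finset.prod_congr rfl fun l hl => ?_
      rw [Finset.mem_erase, Finset.mem_erase] at hl
      rw [hc l hl.2.1 hl.1]
    have hstep : (∏ l, (X (a l) : MvPolynomial (Idx n) ℝ)) - ∏ l, X (a' l)
        = (X (a l₀) * X (a l₀') - X (amin (a l₀) (a l₀')) * X (amax (a l₀) (a l₀')))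
          * ∏ l ∈ (Finset.univ.erase l₀).erase l₀', X (a l) := by
      rw [hprod a (fun _ _ _ => rfl), hprod a' ha'other, ha'l₀, ha'l₀']
      ring
    have hmem1 : (∏ l, (X (a l) : MvPolynomial (Idx n) ℝ)) - ∏ l, X (a' l)
        ∈ Ideal.span (G0 n) := by
      rw [hstep]; exact Ideal.mul_mem_right _ _ hbin
    have hmem2 := ih (phi a') (lt_of_lt_of_le hphidec hphi) a' le_rfl hperm'
    have hadd := Ideal.add_mem _ hmem1 hmem2
    rwa [sub_add_sub_cancel] at hadd

end Sorting
/-- Modulo `𝒢₀`, the monomial `x_{a¹} ⋯ x_{a^k}` reduces to `x_{b¹} ⋯ x_{b^k}`, where for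
each coordinate `i` the tuple `(b¹_i, …, b^k_i)` is the ascending sort (a monotone
rearrangement) of `(a¹_i, …, a^k_i)`. -/
theorem reduction_mod_G0_sorts {d : ℕ} {n : Fin d → ℕ} (k : ℕ)
    (a b : Fin k → Idx n)
    (hmono : ∀ i : Fin d, Monotone fun l : Fin k => b l i)
    (hperm : ∀ i : Fin d, ∃ π : Equiv.Perm (Fin k), ∀ l, b l i = a (π l) i) :
    ReducesTo (G0 n) (∏ l, X (a l)) (∏ l, X (b l)) :=
  ⟨sort_mem b hmono (phi a) a le_rfl hperm, sorted_not_divisible b hmono⟩
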